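/- The infinite Tribonacci word T is not ultimately periodic: there do not exist p ≥ 1 and N such that T[i] = T[i+p] for all i ≥ N. -/

import Mathlib

/-- The Tribonacci morphism: 0 → 01, 1 → 02, 2 → 0. -/
def tribMap (c : ℕ) : List ℕ := if c = 0 then [0,1] else if c = 1 then [0,2] else [0]

/-- Iterates of the Tribonacci morphism on the word `0`. -/
def tribIter : ℕ → List ℕ
  | 0 => [0]
  | k+1 => (tribIter k).flatMap tribMap

/-- The infinite Tribonacci word, the fixed point starting with 0 of 0→01, 1→02, 2→0. -/
def tribWord (n : ℕ) : ℕ := (tribIter (n+1)).getD n 0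

/-- The Tribonacci numbers. -/
def trib : ℕ → ℕ
  | 0 => 0
  | 1 => 1
  | 2 => 1
  | n+3 => trib (n+2) + trib (n+1) + trib n


lemma count0_flatMap (l : List ℕ) : (l.flatMap tribMap).count 0 = l.length := by
  induction l with
  | nil => simp
  | cons c t ih =>
    simp only [List.flatMap_cons, List.count_append, ih, List.length_cons, tribMap]
    split_ifs <;> simp [List.count_cons] <;> omega

lemma count1_flatMap (l : List ℕ) : (l.flatMap tribMap).count 1 = l.count 0 := by
  induction l with
  | nil => simp
  | cons c t ih =>
    simp only [List.flatMap_cons, List.count_append, ih, List.count_cons, tribMap]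
    split_ifs with h1 h2 <;> simp_all [List.count_cons] <;> omega

lemma length_flatMap_trib (l : List ℕ) :
    (l.flatMap tribMap).length = l.length + l.count 0 + l.count 1 := by
  induction l with
  | nil => simp
  | cons c t ih =>
    simp only [List.flatMap_cons, List.length_append, ih, List.length_cons, List.count_cons, tribMap]
    split_ifs <;> simp_all <;> omega

lemma flatMap_prefix {s t : List ℕ} (h : s <+: t) :
    s.flatMap tribMap <+: t.flatMap tribMap := by
  obtain ⟨r, rfl⟩ := h
  simp only [List.flatMap_append]
  exact ⟨r.flatMap tribMap, rfl⟩

lemma tribIter_prefix_succ (k : ℕ) : tribIter k <+: tribIter (k+1) := by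
  induction k with
  | zero => exact ⟨[1], rfl⟩
  | succ k ih => exact flatMap_prefix ih

lemma tribIter_prefix {a b : ℕ} (h : a ≤ b) : tribIter a <+: tribIter b := by
  induction b with
  | zero => simpa [Nat.le_zero.mp h]
  | succ b ih =>
    rcases Nat.lt_or_ge a (b+1) with h' | h'
    · exact (ih (Nat.lt_succ_iff.mp h')).trans (tribIter_prefix_succ b)
    · have : a = b+1 := le_antisymm h h'
      simp [this]

lemma length_le_flatMap (l : List ℕ) : l.length ≤ (l.flatMap tribMap).length := by
  induction l with
  | nil => simp
  | cons c t ih =>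
    simp only [List.flatMap_cons, List.length_append, List.length_cons]
    have : 1 ≤ (tribMap c).length := by unfold tribMap; split_ifs <;> simp
    omega

lemma lt_length_tribIter (k : ℕ) : k < (tribIter k).length := by
  induction k with
  | zero => simp [tribIter]
  | succ k ih =>
    have h0 : [0] <+: tribIter k := tribIter_prefix (Nat.zero_le k)
    obtain ⟨r, hr⟩ := h0
    show k + 1 < ((tribIter k).flatMap tribMap).length
    rw [← hr]
    simp only [List.flatMap_append, List.length_append]
    have := length_le_flatMap r
    have hrl : r.length = (tribIter k).length - 1 := by
      have := congrArg List.length hr; simp at this; omega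
    have h2 : ([0].flatMap tribMap).length = 2 := rfl
    rw [h2]
    omega

lemma getD_prefix {s t : List ℕ} (h : s <+: t) {n : ℕ} (hn : n < s.length) :
    s.getD n 0 = t.getD n 0 := by
  obtain ⟨r, rfl⟩ := h
  simp [List.getD, List.getElem?_append_left hn]

lemma tribWord_eq (m n : ℕ) (hn : n < (tribIter m).length) :
    tribWord n = (tribIter m).getD n 0 := by
  rcases Nat.le_total (n+1) m with h | h
  · exact getD_prefix (tribIter_prefix h) (Nat.lt_of_succ_lt (lt_length_tribIter (n+1)))
  · exact (getD_prefix (tribIter_prefix h) hn).symm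

def tribLen (k : ℕ) : ℕ := (tribIter k).length

lemma tribLen_rec (k : ℕ) :
    tribLen (k+3) = tribLen (k+2) + tribLen (k+1) + tribLen k := by
  have hlen : ∀ j, tribLen (j+1) = tribLen j + (tribIter j).count 0 + (tribIter j).count 1 :=
    fun j => length_flatMap_trib (tribIter j)
  have hn0 : ∀ j, (tribIter (j+1)).count 0 = tribLen j := fun j => count0_flatMap (tribIter j)
  have hn1 : ∀ j, (tribIter (j+1)).count 1 = (tribIter j).count 0 :=
    fun j => count1_flatMap (tribIter j)
  rw [hlen (k+2), hn0 (k+1), hn1 (k+1), hn0 k, hlen (k+1), hn0 k, hn1 k, hlen k]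

lemma lt_tribLen (k : ℕ) : k < tribLen k := lt_length_tribIter k

def tcnt (n : ℕ) : ℕ := ((List.range n).map tribWord).count 0

lemma map_range_tribWord (m : ℕ) :
    (List.range (tribLen m)).map tribWord = tribIter m := by
  apply List.ext_getElem (by simp [tribLen])
  intro n h1 h2
  simp only [List.getElem_map, List.getElem_range]
  have hn : n < (tribIter m).length := h2
  rw [tribWord_eq m n hn, List.getD_eq_getElem _ _ hn]

lemma tcnt_tribLen_succ (k : ℕ) : tcnt (tribLen (k+1)) = tribLen k := by
  unfold tcnt
  rw [map_range_tribWord (k+1)]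
  exact count0_flatMap (tribIter k)

lemma tcnt_add (a w : ℕ) :
    tcnt (a + w) = tcnt a + ((List.range w).map (fun j => tribWord (a + j))).count 0 := by
  unfold tcnt
  rw [List.range_add, List.map_append, List.count_append, List.map_map]
  rfl

lemma tcnt_le (a w : ℕ) : tcnt a ≤ tcnt (a + w) ∧ tcnt (a + w) ≤ tcnt a + w := by
  rw [tcnt_add a w]
  constructor
  · omega
  · have : ((List.range w).map (fun j => tribWord (a + j))).count 0 ≤ ((List.range w).map (fun j => tribWord (a + j))).length := List.count_le_length
    simp at this
    omega

lemma no_sol {p c : ℕ} (hp : 1 ≤ p) (h : p^3 = c*p^2 + c^2*p + c^3) : False := by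
  have hg : 0 < p.gcd c := Nat.gcd_pos_of_pos_left c hp
  set g := p.gcd c with hgdef
  set a := p / g with hadef
  set b := c / g with hbdef
  have hco : a.Coprime b := Nat.coprime_div_gcd_div_gcd hg
  have hp' : p = g * a := (Nat.mul_div_cancel' (Nat.gcd_dvd_left p c)).symm
  have hc' : c = g * b := (Nat.mul_div_cancel' (Nat.gcd_dvd_right p c)).symm
  have key : a^3 = a^2*b + a*b^2 + b^3 := by
    have h' : g^3 * a^3 = g^3 * (a^2*b + a*b^2 + b^3) := by
      rw [hp', hc'] at h; ring_nf at h ⊢; linarith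
    exact Nat.eq_of_mul_eq_mul_left (pow_pos hg 3) h'
  have hb1 : b = 1 := by
    have hdvd : b ∣ a^3 := ⟨a^2 + a*b + b^2, by rw [key]; ring⟩
    exact ((Nat.Coprime.pow_left 3 hco).symm).eq_one_of_dvd hdvd
  rw [hb1] at key
  have ha1 : 1 ≤ a := by
    rcases Nat.eq_zero_or_pos a with h0 | h1
    · rw [h0] at hp'; omega
    · exact h1
  rcases Nat.lt_or_ge a 2 with h2 | h2
  · interval_cases a <;> omega
  · nlinarith [key]

set_option maxHeartbeats 2000000 in
theorem tribWord_not_ultimately_periodic :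
    ¬ ∃ p : ℕ, 1 ≤ p ∧ ∃ N : ℕ, ∀ i ≥ N, tribWord i = tribWord (i + p) := by
  rintro ⟨p, hp, N, hper⟩
  -- shift invariance by multiples of p
  have hshift : ∀ m, ∀ i ≥ N, tribWord (i + m*p) = tribWord i := by
    intro m
    induction m with
    | zero => simp
    | succ m ih =>
      intro i hi
      have h1 : i + (m+1)*p = (i + m*p) + p := by ring
      rw [h1, ← hper (i + m*p) (le_trans hi (Nat.le_add_right _ _)), ih i hi]
  -- window count is constant
  set wc : ℕ → ℕ := fun a => ((List.range p).map (fun j => tribWord (a + j))).count 0 with hwc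
  have hwin : ∀ m, wc (N + m*p) = wc N := by
    intro m
    simp only [hwc]
    congr 1
    apply List.map_congr_left
    intro j hj
    have : N + m*p + j = (N + j) + m*p := by ring
    rw [this, hshift m (N + j) (Nat.le_add_right _ _)]
  set c := wc N with hcdef
  have harith : ∀ m, tcnt (N + m*p) = tcnt N + m * c := by
    intro m
    induction m with
    | zero => simp
    | succ m ih =>
      have h1 : N + (m+1)*p = (N + m*p) + p := by ring
      have h2 := hwin m
      simp only [hwc] at h2
      rw [h1, tcnt_add (N + m*p) p, ih, h2]
      ring
  -- the key bounded estimate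
  set B : ℤ := ((p * tcnt N + c * N + c * p + p * p : ℕ) : ℤ) with hBdef
  have hE : ∀ k, N ≤ k → |(p : ℤ) * tribLen k - c * tribLen (k+1)| ≤ B := by
    intro k hk
    set q := tribLen (k+1) with hqdef
    have hqN : N + 1 ≤ q := by have := lt_tribLen (k+1); omega
    obtain ⟨m, r, hrp, hq⟩ : ∃ m r, r < p ∧ q = N + m * p + r := by
      refine ⟨(q - N) / p, (q - N) % p, Nat.mod_lt _ hp, ?_⟩
      have hdm : p * ((q - N) / p) + (q - N) % p = q - N := Nat.div_add_mod (q - N) p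
      have hcomm : (q - N) / p * p = p * ((q - N) / p) := Nat.mul_comm _ _
      omega
    have h1 : tcnt (N + m*p) = tcnt N + m*c := harith m
    have h2 := tcnt_le (N + m*p) r
    rw [← hq] at h2
    have h3 : tcnt q = tribLen k := tcnt_tribLen_succ k
    have hlow : tcnt N + m*c ≤ tribLen k := by omega
    have hhigh : tribLen k ≤ tcnt N + m*c + r := by omega
    have hlowZ : ((tcnt N : ℤ) + m * c) ≤ (tribLen k : ℤ) := by exact_mod_cast hlow
    have hhighZ : ((tribLen k : ℤ)) ≤ (tcnt N : ℤ) + m * c + r := by exact_mod_cast hhigh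
    have hrpZ : (r : ℤ) ≤ p := by exact_mod_cast hrp.le
    have h4 : (p:ℤ) * ((tcnt N : ℤ) + m * c) ≤ (p:ℤ) * tribLen k :=
      mul_le_mul_of_nonneg_left hlowZ (Nat.cast_nonneg p)
    have h4' : (p:ℤ) * tribLen k ≤ (p:ℤ) * ((tcnt N : ℤ) + m * c + r) :=
      mul_le_mul_of_nonneg_left hhighZ (Nat.cast_nonneg p)
    have h5 : (c:ℤ) * r ≤ (c:ℤ) * p := mul_le_mul_of_nonneg_left hrpZ (Nat.cast_nonneg c)
    have h5' : (p:ℤ) * r ≤ (p:ℤ) * p := mul_le_mul_of_nonneg_left hrpZ (Nat.cast_nonneg p)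
    have hcN : (0:ℤ) ≤ (c:ℤ) * N := by positivity
    have hcr : (0:ℤ) ≤ (c:ℤ) * r := by positivity
    rw [abs_le, hBdef]
    constructor
    · push_cast [hq]
      ring_nf at h4 h5 hcN ⊢
      nlinarith [h4, h5, hcN]
    · push_cast [hq]
      ring_nf at h4' h5' hcN hcr ⊢
      nlinarith [h4', h5', hcN, hcr]
  -- linear combination identity
  set A1 : ℤ := (p:ℤ)^2 - c*p - c^2 with hA1
  set A2 : ℤ := (c:ℤ)*p - c^2 with hA2
  set A3 : ℤ := (c:ℤ)^2 with hA3
  set D : ℤ := (p:ℤ)^3 - c*p^2 - c^2*p - c^3 with hD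
  have hid : ∀ k, D * (tribLen k : ℤ) =
      A1 * ((p:ℤ) * tribLen k - c * tribLen (k+1))
      + A2 * ((p:ℤ) * tribLen (k+1) - c * tribLen (k+2))
      + A3 * ((p:ℤ) * tribLen (k+2) - c * tribLen (k+3)) := by
    intro k
    have hrec : ((tribLen (k+3) : ℤ)) = tribLen (k+2) + tribLen (k+1) + tribLen k := by
      exact_mod_cast tribLen_rec k
    rw [hA1, hA2, hA3, hD]
    linear_combination (c:ℤ)^3 * hrec
  set B' : ℤ := (|A1| + |A2| + |A3|) * B with hB'
  have hBnn : 0 ≤ B := by rw [hBdef]; positivity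
  have hDk : ∀ k, N ≤ k → |D| * (tribLen k : ℤ) ≤ B' := by
    intro k hk
    have h0 : |D * (tribLen k : ℤ)| = |D| * tribLen k := by
      rw [abs_mul, abs_of_nonneg (show (0:ℤ) ≤ (tribLen k : ℤ) from Nat.cast_nonneg _)]
    rw [← h0, hid k, hB']
    have e1 := hE k hk
    have e2 := hE (k+1) (by omega)
    have e3 := hE (k+2) (by omega)
    have big : ∀ (x y z : ℤ), |x| ≤ B → |y| ≤ B → |z| ≤ B →
        |A1*x + A2*y + A3*z| ≤ (|A1| + |A2| + |A3|) * B := by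
      intro x y z hx hy hz
      calc |A1*x + A2*y + A3*z| ≤ |A1*x| + |A2*y| + |A3*z| := abs_add_three _ _ _
        _ = |A1| * |x| + |A2| * |y| + |A3| * |z| := by rw [abs_mul, abs_mul, abs_mul]
        _ ≤ |A1| * B + |A2| * B + |A3| * B := by gcongr <;> first | exact abs_nonneg _ | assumption
        _ = (|A1| + |A2| + |A3|) * B := by ring
    exact big _ _ _ e1 e2 e3
  have hD0 : D = 0 := by
    by_contra hne
    have h1 : (1:ℤ) ≤ |D| := Int.one_le_abs hne
    set k := N + B'.toNat with hkdef
    have hlen : (k:ℤ) + 1 ≤ tribLen k := by exact_mod_cast lt_tribLen k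
    have := hDk k (Nat.le_add_right _ _)
    have hB'nn : 0 ≤ B' := by
      rw [hB']; positivity
    have htoNat : B' ≤ (B'.toNat : ℤ) := by omega
    have hmul : (1:ℤ) * (tribLen k : ℤ) ≤ |D| * tribLen k :=
      mul_le_mul_of_nonneg_right h1 (Nat.cast_nonneg _)
    have hk' : ((N + B'.toNat : ℕ) : ℤ) + 1 ≤ (tribLen k : ℤ) := by
      rw [hkdef] at hlen; exact_mod_cast hlen
    push_cast at hk'
    nlinarith [hmul, hk', htoNat, (Nat.cast_nonneg N : (0:ℤ) ≤ N)]
  have hfin : p^3 = c*p^2 + c^2*p + c^3 := by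
    have : (p:ℤ)^3 = c*p^2 + c^2*p + c^3 := by rw [hD] at hD0; linarith
    exact_mod_cast this
  exact no_sol hp hfin
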